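/- Let p be a prime and m ≥ 1. The kernel of the natural surjection mod Φ_m : ℤ_p[[t^ℤ̂]] → ℤ_p[t]/(Φ_m(t)) equals the principal ideal of ℤ_p[[t^ℤ̂]] generated by Φ_m(t). -/

import Mathlib

open Polynomial

set_option synthInstance.maxHeartbeats 1000000
set_option maxHeartbeats 1000000

noncomputable section
noncomputable section

/-- The ring of profinite integers `ẐZ = lim_n ℤ/nℤ`, realized as the subring of
`∏ n : ℕ+, ZMod n` consisting of families compatible under the natural projections. -/
def ZHatSubring : Subring (∀ n : ℕ+, ZMod n) where
  carrier := {f | ∀ (m n : ℕ+) (h : (m : ℕ) ∣ (n : ℕ)), ZMod.castHom h (ZMod m) (f n) = f m}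
  mul_mem' := fun {a b} ha hb m n h => by
    simp only [Pi.mul_apply, map_mul, ha m n h, hb m n h]
  one_mem' := fun m n h => map_one _
  add_mem' := fun {a b} ha hb m n h => by
    simp only [Pi.add_apply, map_add, ha m n h, hb m n h]
  zero_mem' := fun m n h => map_zero _
  neg_mem' := fun {a} ha m n h => by
    simp only [Pi.neg_apply, map_neg, ha m n h]

/-- The profinite integers as a type. -/
abbrev ZHat : Type := ZHatSubring

instance : CommRing ZHat := inferInstance

/-- The quotient ring `R[t]/(tⁿ - 1)`. -/
abbrev CycModN (R : Type) [CommRing R] (n : ℕ+) : Type :=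
  Polynomial R ⧸ Ideal.span {(X : Polynomial R) ^ (n : ℕ) - 1}

lemma X_pow_sub_one_dvd {R : Type} [CommRing R] {m n : ℕ} (h : m ∣ n) :
    (X : Polynomial R) ^ m - 1 ∣ (X : Polynomial R) ^ n - 1 := by
  obtain ⟨k, rfl⟩ := h
  simpa [pow_mul] using sub_dvd_pow_sub_pow ((X : Polynomial R) ^ m) 1 k

/-- The natural transition map `R[t]/(tⁿ-1) → R[t]/(tᵐ-1)` for `m ∣ n`. -/
def cycTransition (R : Type) [CommRing R] {m n : ℕ+} (h : (m : ℕ) ∣ (n : ℕ)) :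
    CycModN R n →+* CycModN R m :=
  Ideal.Quotient.factor
    (Ideal.span_singleton_le_span_singleton.mpr (X_pow_sub_one_dvd h))

/-- The completed group ring `R[[t^Ẑ]] = lim_n R[t]/(tⁿ-1)`, realized as the subring of
`∏ n : ℕ+, R[t]/(tⁿ-1)` of families compatible under the transition maps. -/
def CompletedCycRing (R : Type) [CommRing R] : Subring (∀ n : ℕ+, CycModN R n) where
  carrier := {f | ∀ (m n : ℕ+) (h : (m : ℕ) ∣ (n : ℕ)), cycTransition R h (f n) = f m}
  mul_mem' := fun {a b} ha hb m n h => by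
    simp only [Pi.mul_apply, map_mul, ha m n h, hb m n h]
  one_mem' := fun m n h => map_one _
  add_mem' := fun {a b} ha hb m n h => by
    simp only [Pi.add_apply, map_add, ha m n h, hb m n h]
  zero_mem' := fun m n h => map_zero _
  neg_mem' := fun {a} ha m n h => by
    simp only [Pi.neg_apply, map_neg, ha m n h]

instance completedCycRingCommRing (R : Type) [CommRing R] :
    CommRing (CompletedCycRing R) := inferInstance

/-- The natural ring homomorphism `R[t] → R[[t^Ẑ]]`, `f ↦ (f mod (tⁿ-1))ₙ`. -/
def polyToCompleted (R : Type) [CommRing R] : Polynomial R →+* CompletedCycRing R :=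
  RingHom.codRestrict (Pi.ringHom fun n => Ideal.Quotient.mk _) _
    (fun f m n h => by
      simp [cycTransition, Pi.ringHom_apply]
      rfl)

/-- The natural ring homomorphism `ℤ[t] → R[[t^Ẑ]]`. -/
def intPolyEmb (R : Type) [CommRing R] : Polynomial ℤ →+* CompletedCycRing R :=
  (polyToCompleted R).comp (Polynomial.mapRingHom (Int.castRingHom R))


/-- The natural map `mod Φ_m : R[[t^Ẑ]] → R[t]/(Φ_m(t))`, obtained as the composite
`R[[t^Ẑ]] → R[t]/(tᵐ-1) → R[t]/(Φ_m(t))`. -/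
def modPhi (R : Type) [CommRing R] (m : ℕ+) :
    CompletedCycRing R →+* Polynomial R ⧸ Ideal.span {Polynomial.cyclotomic (m : ℕ) R} :=
  (Ideal.Quotient.factor (Ideal.span_singleton_le_span_singleton.mpr
      (Polynomial.cyclotomic.dvd_X_pow_sub_one (m : ℕ) R))).comp
    ((Pi.evalRingHom _ m).comp (CompletedCycRing R).subtype)




lemma padic_haus {p : ℕ} [hp : Fact p.Prime] {c : PadicInt p} (h : ∀ k : ℕ, (p : PadicInt p) ^ k ∣ c) : c = 0 := by
  refine IsHausdorff.haus (I := IsLocalRing.maximalIdeal (PadicInt p)) inferInstance c fun k => ?_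
  simpa [SModEq.zero, PadicInt.maximalIdeal_eq_span_p, Ideal.span_singleton_pow,
    ← Ideal.one_eq_top, smul_eq_mul, mul_one, Ideal.mem_span_singleton] using h k

lemma padic_complete {p : ℕ} [hp : Fact p.Prime] (c : ℕ → PadicInt p)
    (h : ∀ k, (p : PadicInt p) ^ k ∣ c (k + 1) - c k) :
    ∃ L, ∀ k, (p : PadicInt p) ^ k ∣ L - c k := by
  have key : ∀ k l, k ≤ l → (p : PadicInt p) ^ k ∣ c l - c k := by
    intro k l hkl
    induction l, hkl using Nat.le_induction with
    | base => simp
    | succ l hkl ih =>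
      have h1 : (p : PadicInt p) ^ k ∣ c (l + 1) - c l := dvd_trans (pow_dvd_pow _ hkl) (h l)
      simpa using dvd_add h1 ih
  have hyp : ∀ {a b : ℕ}, a ≤ b → c a ≡ c b
      [SMOD (IsLocalRing.maximalIdeal (PadicInt p)) ^ a • (⊤ : Submodule (PadicInt p) (PadicInt p))] := by
    intro a b hab
    simp only [SModEq.sub_mem, PadicInt.maximalIdeal_eq_span_p, Ideal.span_singleton_pow,
      ← Ideal.one_eq_top, smul_eq_mul, mul_one, Ideal.mem_span_singleton]
    simpa [neg_sub] using dvd_neg.mpr (key a b hab)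
  obtain ⟨L, hL⟩ := IsPrecomplete.prec
    (inferInstance : IsPrecomplete (IsLocalRing.maximalIdeal (PadicInt p)) (PadicInt p)) hyp
  refine ⟨L, fun k => ?_⟩
  have := hL k
  simp only [SModEq.sub_mem, PadicInt.maximalIdeal_eq_span_p, Ideal.span_singleton_pow,
    ← Ideal.one_eq_top, smul_eq_mul, mul_one, Ideal.mem_span_singleton] at this
  simpa [neg_sub] using dvd_neg.mpr this
section CycAux

variable {R : Type} [CommRing R]

/-- The quotient map onto `CycModN R n`. -/
def qmk (R : Type) [CommRing R] (n : ℕ+) : Polynomial R →+* CycModN R n :=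
  Ideal.Quotient.mk _

lemma qmk_surjective (n : ℕ+) : Function.Surjective (qmk R n) :=
  Ideal.Quotient.mk_surjective

lemma qmk_eq_qmk {n : ℕ+} {P Q : Polynomial R}
    (h : (X : Polynomial R) ^ (n : ℕ) - 1 ∣ P - Q) : qmk R n P = qmk R n Q :=
  Ideal.Quotient.eq.mpr (Ideal.mem_span_singleton.mpr h)

lemma qmk_eq_zero_iff {n : ℕ+} {P : Polynomial R} :
    qmk R n P = 0 ↔ (X : Polynomial R) ^ (n : ℕ) - 1 ∣ P := by
  rw [qmk, Ideal.Quotient.eq_zero_iff_mem, Ideal.mem_span_singleton]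

lemma qmk_sub_eq_zero_iff {n : ℕ+} {P Q : Polynomial R} :
    qmk R n P = qmk R n Q ↔ (X : Polynomial R) ^ (n : ℕ) - 1 ∣ P - Q := by
  rw [qmk, Ideal.Quotient.eq, Ideal.mem_span_singleton]

lemma transition_qmk {n' n : ℕ+} (h : (n' : ℕ) ∣ (n : ℕ)) (P : Polynomial R) :
    cycTransition R h (qmk R n P) = qmk R n' P :=
  Ideal.Quotient.factor_mk _ _

lemma elt_component (x : CompletedCycRing R) {n' n : ℕ+} (h : (n' : ℕ) ∣ (n : ℕ))
    {P : Polynomial R} (hP : qmk R n P = x.1 n) : qmk R n' P = x.1 n' := by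
  rw [← x.2 n' n h, ← hP, transition_qmk]

lemma modPhi_apply (m : ℕ+) (x : CompletedCycRing R) :
    modPhi R m x = Ideal.Quotient.factor (Ideal.span_singleton_le_span_singleton.mpr
      (Polynomial.cyclotomic.dvd_X_pow_sub_one (m : ℕ) R)) (x.1 m) := rfl

lemma modPhi_eq (m : ℕ+) (x : CompletedCycRing R) {P : Polynomial R}
    (hP : qmk R m P = x.1 m) :
    modPhi R m x = Ideal.Quotient.mk (Ideal.span {Polynomial.cyclotomic (m : ℕ) R}) P := by
  rw [modPhi_apply, ← hP]
  exact Ideal.Quotient.factor_mk _ _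

lemma intPolyEmb_component (f : Polynomial ℤ) (n : ℕ+) :
    (intPolyEmb R f).1 n = qmk R n (f.map (Int.castRingHom R)) := rfl

lemma mul_component (a b : CompletedCycRing R) (n : ℕ+) :
    (a * b).1 n = a.1 n * b.1 n := rfl

lemma monic_fn (n : ℕ+) : ((X : Polynomial R) ^ (n : ℕ) - 1).Monic := by
  simpa using monic_X_pow_sub_C (1 : R) n.pos.ne'

end CycAux
section Transfer

variable {p : ℕ} [hp : Fact p.Prime]

lemma dvd_coeff_of_dvd {n : ℕ+} {k : ℕ} {z : Polynomial (PadicInt p)}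
    (h : (p : CycModN (PadicInt p) n) ^ k ∣ qmk (PadicInt p) n z) (i : ℕ) :
    (p : PadicInt p) ^ k ∣ (z %ₘ ((X : Polynomial (PadicInt p)) ^ (n : ℕ) - 1)).coeff i := by
  obtain ⟨e, he⟩ := h
  obtain ⟨E, rfl⟩ := qmk_surjective n e
  have h2 : qmk (PadicInt p) n (z - (p : Polynomial (PadicInt p)) ^ k * E) = 0 := by
    rw [map_sub, map_mul, map_pow, map_natCast, he]
    ring
  have h3 := qmk_eq_zero_iff.mp h2
  have h4 : z %ₘ ((X : Polynomial (PadicInt p)) ^ (n : ℕ) - 1)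
      = ((p : Polynomial (PadicInt p)) ^ k * E) %ₘ ((X : Polynomial (PadicInt p)) ^ (n : ℕ) - 1) :=
    modByMonic_eq_of_dvd_sub (monic_fn n) h3
  have h5 : (p : Polynomial (PadicInt p)) ^ k * E = ((p : PadicInt p) ^ k) • E := by
    rw [smul_eq_C_mul, map_pow, C_eq_natCast]
  rw [h4, h5, smul_modByMonic, coeff_smul]
  exact Dvd.intro _ rfl

lemma dvd_qmk_of_dvd_coeff {n : ℕ+} {k : ℕ} {z : Polynomial (PadicInt p)}
    (h : ∀ i, (p : PadicInt p) ^ k ∣ z.coeff i) :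
    (p : CycModN (PadicInt p) n) ^ k ∣ qmk (PadicInt p) n z := by
  obtain ⟨Q, hQ⟩ := (C_dvd_iff_dvd_coeff ((p : PadicInt p) ^ k) z).mpr h
  refine ⟨qmk (PadicInt p) n Q, ?_⟩
  rw [hQ, map_mul]
  congr 1
  rw [← Nat.cast_pow, C_eq_natCast, map_natCast, Nat.cast_pow]

lemma eq_zero_of_forall_pow_dvd {n : ℕ+} {u : CycModN (PadicInt p) n}
    (h : ∀ k : ℕ, (p : CycModN (PadicInt p) n) ^ k ∣ u) : u = 0 := by
  obtain ⟨z, rfl⟩ := qmk_surjective n u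
  have hz : z %ₘ ((X : Polynomial (PadicInt p)) ^ (n : ℕ) - 1) = 0 := by
    ext i
    simpa using padic_haus fun k => dvd_coeff_of_dvd (h k) i
  rw [qmk_eq_zero_iff]
  exact (modByMonic_eq_zero_iff_dvd (monic_fn n)).mp hz

end Transfer

/-- The prime `p` as a positive natural. -/
def pnatP (p : ℕ) [hp : Fact p.Prime] : ℕ+ := ⟨p, hp.out.pos⟩

@[simp] lemma pnatP_coe (p : ℕ) [hp : Fact p.Prime] : ((pnatP p) : ℕ) = p := rfl

section Main

variable {p : ℕ} [hp : Fact p.Prime] {m : ℕ+}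

lemma exists_factor (x : CompletedCycRing (PadicInt p)) (hx : modPhi (PadicInt p) m x = 0) :
    ∃ y : CompletedCycRing (PadicInt p),
      y * intPolyEmb (PadicInt p) (cyclotomic (m : ℕ) ℤ) = x := by
  have hΦ0 : (cyclotomic (m : ℕ) (PadicInt p)) ≠ 0 := (cyclotomic.monic _ (PadicInt p)).ne_zero
  -- lifts of components
  choose ξ hξ using fun n : ℕ+ => qmk_surjective (R := (PadicInt p)) n (x.1 n)
  have hpush : ∀ (n' n : ℕ+), (n' : ℕ) ∣ (n : ℕ) → qmk (PadicInt p) n' (ξ n) = x.1 n' :=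
    fun n' n h => elt_component x h (hξ n)
  -- kernel divisibility
  have hker : ∀ n : ℕ+, (m : ℕ) ∣ (n : ℕ) → (cyclotomic (m : ℕ) (PadicInt p)) ∣ ξ n := by
    intro n hmn
    have h1 : Ideal.Quotient.mk (Ideal.span {cyclotomic (m : ℕ) (PadicInt p)}) (ξ n) = 0 := by
      rw [← modPhi_eq m x (hpush m n hmn)]; exact hx
    rwa [Ideal.Quotient.eq_zero_iff_mem, Ideal.mem_span_singleton] at h1
  choose W hW using hker
  -- complementary divisors g
  have hgdvd : ∀ n : ℕ+, (m : ℕ) ∣ (n : ℕ) →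
      (cyclotomic (m : ℕ) (PadicInt p)) ∣ (X : Polynomial (PadicInt p)) ^ (n : ℕ) - 1 :=
    fun n h => (Polynomial.cyclotomic.dvd_X_pow_sub_one (m : ℕ) (PadicInt p)).trans (X_pow_sub_one_dvd h)
  choose g hg using hgdvd
  -- geometric series relation
  have hgrel : ∀ (n N : ℕ+) (hn : (m : ℕ) ∣ (n : ℕ)) (hN : (m : ℕ) ∣ (N : ℕ)) (c : ℕ),
      (N : ℕ) = (n : ℕ) * c →
      g N hN = g n hn * ∑ j ∈ Finset.range c, ((X : Polynomial (PadicInt p)) ^ (n : ℕ)) ^ j := by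
    intro n N hn hN c hc
    apply mul_left_cancel₀ hΦ0
    rw [← hg N hN, ← mul_assoc, ← hg n hn,
      mul_comm ((X : Polynomial (PadicInt p)) ^ (n : ℕ) - 1), geom_sum_mul, ← pow_mul, ← hc]
  have hsum : ∀ (n : ℕ+) (c : ℕ),
      qmk (PadicInt p) n (∑ j ∈ Finset.range c, ((X : Polynomial (PadicInt p)) ^ (n : ℕ)) ^ j)
        = (c : CycModN (PadicInt p) n) := by
    intro n c
    have h1 : qmk (PadicInt p) n ((X : Polynomial (PadicInt p)) ^ (n : ℕ)) = 1 := by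
      have := qmk_eq_qmk (R := (PadicInt p)) (n := n) (P := (X : Polynomial (PadicInt p)) ^ (n : ℕ)) (Q := 1)
        (by simp)
      simpa using this
    rw [map_sum]
    simp [map_pow, h1]
  -- core divisibility lemma
  have hDIV : ∀ (n N : ℕ+) (hn : (m : ℕ) ∣ (n : ℕ)) (hN : (m : ℕ) ∣ (N : ℕ)) (c : ℕ),
      (N : ℕ) = (n : ℕ) * c → ∀ A B : Polynomial (PadicInt p),
      ((X : Polynomial (PadicInt p)) ^ (N : ℕ) - 1 ∣
        (cyclotomic (m : ℕ) (PadicInt p)) * A - (cyclotomic (m : ℕ) (PadicInt p)) * B) →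
      (c : CycModN (PadicInt p) n) ∣ qmk (PadicInt p) n A - qmk (PadicInt p) n B := by
    intro n N hn hN c hc A B hAB
    obtain ⟨q, hq⟩ := hAB
    have hq' : (cyclotomic (m : ℕ) (PadicInt p)) * (A - B) = (cyclotomic (m : ℕ) (PadicInt p)) * (g N hN * q) := by
      rw [mul_sub, hq, hg N hN]; ring
    have hAB' : A - B = g N hN * q := mul_left_cancel₀ hΦ0 hq'
    have h2 : qmk (PadicInt p) n A - qmk (PadicInt p) n B
        = qmk (PadicInt p) n (g n hn) * (c : CycModN (PadicInt p) n) * qmk (PadicInt p) n q := by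
      rw [← map_sub, hAB', hgrel n N hn hN c hc, map_mul, map_mul, hsum]
    exact ⟨qmk (PadicInt p) n (g n hn) * qmk (PadicInt p) n q, by rw [h2]; ring⟩
  -- levels
  have hNfc : ∀ (n : ℕ+) (k : ℕ),
      ((n * m * pnatP p ^ k : ℕ+) : ℕ) = (n : ℕ) * (m : ℕ) * p ^ k := by
    intro n k; simp [PNat.mul_coe, PNat.pow_coe]
  have hmN : ∀ (n : ℕ+) (k : ℕ), (m : ℕ) ∣ ((n * m * pnatP p ^ k : ℕ+) : ℕ) :=
    fun n k => ⟨(n : ℕ) * p ^ k, by rw [hNfc]; ring⟩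
  have hnN : ∀ (n : ℕ+) (k : ℕ), (n : ℕ) ∣ ((n * m * pnatP p ^ k : ℕ+) : ℕ) :=
    fun n k => ⟨(m : ℕ) * p ^ k, by rw [hNfc]; ring⟩
  have hNsucc : ∀ (n : ℕ+) (k : ℕ), ((n * m * pnatP p ^ k : ℕ+) : ℕ)
      ∣ ((n * m * pnatP p ^ (k + 1) : ℕ+) : ℕ) := by
    intro n k; rw [hNfc, hNfc, pow_succ]; exact ⟨p, by ring⟩
  have hNmono : ∀ (n' n : ℕ+) (k : ℕ), (n' : ℕ) ∣ (n : ℕ) →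
      ((n' * m * pnatP p ^ k : ℕ+) : ℕ)
        ∣ ((n * m * pnatP p ^ k : ℕ+) : ℕ) := by
    intro n' n k h; rw [hNfc, hNfc]
    exact Nat.mul_dvd_mul (Nat.mul_dvd_mul_right h _) dvd_rfl
  have hpk : ∀ (n : ℕ+) (k : ℕ) (u : CycModN (PadicInt p) n),
      (((m : ℕ) * p ^ k : ℕ) : CycModN (PadicInt p) n) ∣ u → (p : CycModN (PadicInt p) n) ^ k ∣ u := by
    intro n k u hu
    refine dvd_trans ⟨((m : ℕ) : CycModN (PadicInt p) n), ?_⟩ hu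
    push_cast; ring
  -- Cauchy property
  have hCau : ∀ (n : ℕ+) (hn : (m : ℕ) ∣ (n : ℕ)) (k : ℕ),
      (p : CycModN (PadicInt p) n) ^ k ∣
        qmk (PadicInt p) n (W (n * m * pnatP p ^ (k + 1)) (hmN n (k + 1)))
          - qmk (PadicInt p) n (W (n * m * pnatP p ^ k) (hmN n k)) := by
    intro n hn k
    apply hpk
    refine hDIV n (n * m * pnatP p ^ k) hn (hmN n k) ((m : ℕ) * p ^ k)
      (by rw [hNfc]; ring) _ _ ?_
    rw [← hW _ (hmN n (k + 1)), ← hW _ (hmN n k),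
      ← qmk_sub_eq_zero_iff (R := (PadicInt p)) (n := n * m * pnatP p ^ k),
      hpush _ _ (hNsucc n k), hξ]
  -- cross compatibility
  have hCross : ∀ (n' n : ℕ+) (h : (n' : ℕ) ∣ (n : ℕ)) (hn' : (m : ℕ) ∣ (n' : ℕ)) (k : ℕ),
      (p : CycModN (PadicInt p) n') ^ k ∣
        qmk (PadicInt p) n' (W (n * m * pnatP p ^ k) (hmN n k))
          - qmk (PadicInt p) n' (W (n' * m * pnatP p ^ k) (hmN n' k)) := by
    intro n' n h hn' k
    apply hpk
    refine hDIV n' (n' * m * pnatP p ^ k) hn' (hmN n' k) ((m : ℕ) * p ^ k)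
      (by rw [hNfc]; ring) _ _ ?_
    rw [← hW _ (hmN n k), ← hW _ (hmN n' k),
      ← qmk_sub_eq_zero_iff (R := (PadicInt p)) (n := n' * m * pnatP p ^ k),
      hpush _ _ (hNmono n' n k h), hξ]
  -- limits
  have hLim : ∀ (n : ℕ+) (hn : (m : ℕ) ∣ (n : ℕ)), ∃ Lq : Polynomial (PadicInt p),
      ∀ k, (p : CycModN (PadicInt p) n) ^ k ∣
        qmk (PadicInt p) n Lq - qmk (PadicInt p) n (W (n * m * pnatP p ^ k) (hmN n k)) := by
    intro n hn
    have hcoC : ∀ (i : ℕ) (k : ℕ), (p : (PadicInt p)) ^ k ∣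
        ((W (n * m * pnatP p ^ (k + 1)) (hmN n (k + 1))
            %ₘ ((X : Polynomial (PadicInt p)) ^ (n : ℕ) - 1)).coeff i)
          - ((W (n * m * pnatP p ^ k) (hmN n k)
            %ₘ ((X : Polynomial (PadicInt p)) ^ (n : ℕ) - 1)).coeff i) := by
      intro i k
      have h3 : (p : CycModN (PadicInt p) n) ^ k ∣ qmk (PadicInt p) n
          (W (n * m * pnatP p ^ (k + 1)) (hmN n (k + 1))
            - W (n * m * pnatP p ^ k) (hmN n k)) := by
        rw [map_sub]; exact hCau n hn k
      have h4 := dvd_coeff_of_dvd h3 i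
      simpa [sub_modByMonic, coeff_sub] using h4
    choose L hL using fun i => padic_complete _ (hcoC i)
    have hdegF : ((X : Polynomial (PadicInt p)) ^ (n : ℕ) - 1).degree = ((n : ℕ) : WithBot ℕ) := by
      simpa using degree_X_pow_sub_C n.pos (1 : (PadicInt p))
    have hLzero : ∀ i, (n : ℕ) ≤ i → L i = 0 := by
      intro i hi
      apply padic_haus
      intro k
      have h5 := hL i k
      have hcoz : (W (n * m * pnatP p ^ k) (hmN n k)
          %ₘ ((X : Polynomial (PadicInt p)) ^ (n : ℕ) - 1)).coeff i = 0 := by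
        apply coeff_eq_zero_of_degree_lt
        refine lt_of_lt_of_le (degree_modByMonic_lt _ (monic_fn n)) ?_
        rw [hdegF]
        exact_mod_cast hi
      rw [hcoz, sub_zero] at h5
      exact h5
    refine ⟨∑ i ∈ Finset.range (n : ℕ), C (L i) * X ^ i, fun k => ?_⟩
    have hq : qmk (PadicInt p) n (W (n * m * pnatP p ^ k) (hmN n k))
        = qmk (PadicInt p) n (W (n * m * pnatP p ^ k) (hmN n k)
            %ₘ ((X : Polynomial (PadicInt p)) ^ (n : ℕ) - 1)) := by
      apply qmk_eq_qmk
      refine ⟨W (n * m * pnatP p ^ k) (hmN n k) /ₘ ((X : Polynomial (PadicInt p)) ^ (n : ℕ) - 1), ?_⟩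
      have h6 := modByMonic_add_div
        (W (n * m * pnatP p ^ k) (hmN n k)) ((X : Polynomial (PadicInt p)) ^ (n : ℕ) - 1)
      linear_combination -h6
    rw [hq, ← map_sub]
    apply dvd_qmk_of_dvd_coeff
    intro i
    rw [coeff_sub]
    by_cases hi : i < (n : ℕ)
    · have hcoeff : (∑ j ∈ Finset.range (n : ℕ), C (L j) * X ^ j).coeff i = L i := by
        simp [finset_sum_coeff, coeff_C_mul, coeff_X_pow, Finset.sum_ite_eq, Finset.mem_range, hi]
      rw [hcoeff]
      exact hL i k
    · push_neg at hi
      have hcoeff : (∑ j ∈ Finset.range (n : ℕ), C (L j) * X ^ j).coeff i = 0 := by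
        have : ¬ (i < (n : ℕ)) := not_lt.mpr hi
        simp [finset_sum_coeff, coeff_C_mul, coeff_X_pow, Finset.sum_ite_eq, Finset.mem_range, this]
      rw [hcoeff, zero_sub, dvd_neg]
      have h7 := hL i k
      rw [hLzero i hi, zero_sub, dvd_neg] at h7
      exact h7
  choose Lp hLp using hLim
  -- solving property
  have hsolve : ∀ (n : ℕ+) (hn : (m : ℕ) ∣ (n : ℕ)),
      qmk (PadicInt p) n (cyclotomic (m : ℕ) (PadicInt p)) * qmk (PadicInt p) n (Lp n hn) = x.1 n := by
    intro n hn
    have hzero : ∀ k : ℕ, (p : CycModN (PadicInt p) n) ^ k ∣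
        (qmk (PadicInt p) n (cyclotomic (m : ℕ) (PadicInt p)) * qmk (PadicInt p) n (Lp n hn) - x.1 n) := by
      intro k
      have h1 : qmk (PadicInt p) n (cyclotomic (m : ℕ) (PadicInt p))
          * qmk (PadicInt p) n (W (n * m * pnatP p ^ k) (hmN n k)) = x.1 n := by
        rw [← map_mul, ← hW _ (hmN n k)]
        exact hpush n _ (hnN n k)
      have h2 : qmk (PadicInt p) n (cyclotomic (m : ℕ) (PadicInt p)) * qmk (PadicInt p) n (Lp n hn) - x.1 n
          = qmk (PadicInt p) n (cyclotomic (m : ℕ) (PadicInt p)) *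
            (qmk (PadicInt p) n (Lp n hn) - qmk (PadicInt p) n (W (n * m * pnatP p ^ k) (hmN n k))) := by
        rw [mul_sub, h1]
      rw [h2]
      exact Dvd.dvd.mul_left (hLp n hn k) _
    exact sub_eq_zero.mp (eq_zero_of_forall_pow_dvd hzero)
  -- compatibility among multiples of m
  have hcompat : ∀ (n' n : ℕ+) (h : (n' : ℕ) ∣ (n : ℕ)) (hn' : (m : ℕ) ∣ (n' : ℕ))
      (hn : (m : ℕ) ∣ (n : ℕ)), qmk (PadicInt p) n' (Lp n hn) = qmk (PadicInt p) n' (Lp n' hn') := by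
    intro n' n h hn' hn
    have hzero : ∀ k : ℕ, (p : CycModN (PadicInt p) n') ^ k ∣
        qmk (PadicInt p) n' (Lp n hn) - qmk (PadicInt p) n' (Lp n' hn') := by
      intro k
      have d1 : (p : CycModN (PadicInt p) n') ^ k ∣
          qmk (PadicInt p) n' (Lp n hn) - qmk (PadicInt p) n' (W (n * m * pnatP p ^ k) (hmN n k)) := by
        have h8 := map_dvd (cycTransition (PadicInt p) h) (hLp n hn k)
        simpa [map_sub, map_pow, map_natCast, transition_qmk] using h8
      have d2 := hCross n' n h hn' k
      have d3 := hLp n' hn' k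
      have h4 := dvd_sub (dvd_add d1 d2) d3
      have h5 : qmk (PadicInt p) n' (Lp n hn) - qmk (PadicInt p) n' (Lp n' hn')
          = (qmk (PadicInt p) n' (Lp n hn) - qmk (PadicInt p) n' (W (n * m * pnatP p ^ k) (hmN n k)))
            + (qmk (PadicInt p) n' (W (n * m * pnatP p ^ k) (hmN n k))
              - qmk (PadicInt p) n' (W (n' * m * pnatP p ^ k) (hmN n' k)))
            - (qmk (PadicInt p) n' (Lp n' hn')
              - qmk (PadicInt p) n' (W (n' * m * pnatP p ^ k) (hmN n' k))) := by
        ring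
      rw [h5]
      exact h4
    exact sub_eq_zero.mp (eq_zero_of_forall_pow_dvd hzero)
  -- assemble y
  have hmnm : ∀ n : ℕ+, (m : ℕ) ∣ ((n * m : ℕ+) : ℕ) := fun n => by
    rw [PNat.mul_coe]; exact dvd_mul_left _ _
  have hymem : ∀ (n' n : ℕ+) (h : (n' : ℕ) ∣ (n : ℕ)),
      cycTransition (PadicInt p) h (qmk (PadicInt p) n (Lp (n * m) (hmnm n))) = qmk (PadicInt p) n' (Lp (n' * m) (hmnm n')) := by
    intro n' n h
    rw [transition_qmk]
    have h2 : ((n' * m : ℕ+) : ℕ) ∣ ((n * m : ℕ+) : ℕ) := by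
      rw [PNat.mul_coe, PNat.mul_coe]; exact Nat.mul_dvd_mul_right h _
    have h3 := hcompat (n' * m) (n * m) h2 (hmnm n') (hmnm n)
    have h4 : (n' : ℕ) ∣ ((n' * m : ℕ+) : ℕ) := by
      rw [PNat.mul_coe]; exact dvd_mul_right _ _
    calc qmk (PadicInt p) n' (Lp (n * m) (hmnm n))
        = cycTransition (PadicInt p) h4 (qmk (PadicInt p) (n' * m) (Lp (n * m) (hmnm n))) := (transition_qmk h4 _).symm
      _ = cycTransition (PadicInt p) h4 (qmk (PadicInt p) (n' * m) (Lp (n' * m) (hmnm n'))) := by rw [h3]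
      _ = qmk (PadicInt p) n' (Lp (n' * m) (hmnm n')) := transition_qmk h4 _
  refine ⟨⟨fun n => qmk (PadicInt p) n (Lp (n * m) (hmnm n)), hymem⟩, ?_⟩
  apply Subtype.ext
  funext n
  rw [mul_component]
  show qmk (PadicInt p) n (Lp (n * m) (hmnm n)) * (intPolyEmb (PadicInt p) (cyclotomic (m : ℕ) ℤ)).1 n = x.1 n
  rw [intPolyEmb_component, map_cyclotomic_int]
  have h4 : (n : ℕ) ∣ ((n * m : ℕ+) : ℕ) := by
    rw [PNat.mul_coe]; exact dvd_mul_right _ _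
  have h5 := hsolve (n * m) (hmnm n)
  have h6 : x.1 n = cycTransition (PadicInt p) h4 (x.1 (n * m)) := (x.2 n (n * m) h4).symm
  rw [h6, ← h5, map_mul, transition_qmk, transition_qmk]
  ring

end Main

/-- For a prime `p` and `m ≥ 1`, the kernel of the natural surjection
`mod Φ_m : ℤ_p[[t^Ẑ]] → ℤ_p[t]/(Φ_m(t))` equals the principal ideal generated by `Φ_m(t)`. -/
theorem ker_modPhi_eq_span_cyclotomic_padic (p : ℕ) [Fact p.Prime] (m : ℕ+) :
    RingHom.ker (modPhi (PadicInt p) m)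
      = Ideal.span {intPolyEmb (PadicInt p) (cyclotomic (m : ℕ) ℤ)} := by
  apply le_antisymm
  · intro x hx
    rw [RingHom.mem_ker] at hx
    obtain ⟨y, hy⟩ := exists_factor x hx
    rw [Ideal.mem_span_singleton']
    exact ⟨y, hy⟩
  · rw [Ideal.span_le, Set.singleton_subset_iff, SetLike.mem_coe, RingHom.mem_ker]
    have h1 : qmk (PadicInt p) m ((cyclotomic (m : ℕ) ℤ).map (Int.castRingHom (PadicInt p)))
        = (intPolyEmb (PadicInt p) (cyclotomic (m : ℕ) ℤ)).1 m := rfl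
    rw [modPhi_eq m _ h1, Ideal.Quotient.eq_zero_iff_mem, Ideal.mem_span_singleton,
      map_cyclotomic_int]
end
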